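/- The map F : M × M → M × M defined by F(x,y) = (x^{q+1} + B·y^{q+1}, x^{r}·y + (a/B)·x·y^{r}) is planar; that is, for every (u,v) ∈ M × M with (u,v) ≠ (0,0), the only (x,y) ∈ M × M satisfying F(x+u, y+v) − F(x,y) − F(u,v) = (0,0) is (x,y) = (0,0). -/

import Mathlib

/-- The planar map of family `S`:
`F(x,y) = (x^{q+1} + B·y^{q+1}, x^r·y + A·x·y^r)` where `A = a/B`. -/


lemma aux_charP (p m : ℕ) (hp : Nat.Prime p) (hm0 : 0 < m)
    (K : Type) [Field K] [Fintype K] (hcard : Fintype.card K = p ^ m) : CharP K p := by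
  obtain ⟨c, hc⟩ := CharP.exists K
  obtain ⟨n, hcp, hcard'⟩ := @FiniteField.card K _ _ c hc
  have hdvd : c ∣ p ^ m := by rw [← hcard, hcard']; exact dvd_pow_self c n.2.ne'
  have hcpd : c ∣ p := hcp.dvd_of_dvd_pow hdvd
  have : c = p := ((Nat.prime_dvd_prime_iff_eq hcp hp).mp hcpd)
  rwa [this] at hc

lemma aux_phi_inj (p m k : ℕ) (hp : Nat.Prime p) (hp2 : p ≠ 2) (hm0 : 0 < m)
    (hk1 : 1 ≤ k) (hodd : Odd (m / Nat.gcd k m))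
    (K : Type) [Field K] [Fintype K] (hcard : Fintype.card K = p ^ m) :
    ∀ z : K, z + z ^ p ^ k = 0 → z = 0 := by
  haveI := Fact.mk hp
  haveI : CharP K p := aux_charP p m hp hm0 K hcard
  have hp3 : 3 ≤ p := by
    have := hp.two_le; omega
  intro z hz
  by_contra hz0
  set q : ℕ := p ^ k with hq
  have hq2 : 2 ≤ q := by
    calc 2 ≤ p := by omega
    _ ≤ p ^ k := Nat.le_self_pow (by omega) p
  -- z ^ (q-1) = -1
  have hzq : z ^ q = -z := by linear_combination hz
  have hzd : z ^ (q - 1) = -1 := by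
    have h1 : z ^ (q - 1) * z = (-1) * z := by
      rw [← pow_succ]
      have : q - 1 + 1 = q := by omega
      rw [this, hzq]; ring
    exact mul_right_cancel₀ hz0 h1
  have hN0 : 1 ≤ p ^ m := Nat.one_le_pow _ _ hp.pos
  have hzN : z ^ (p ^ m - 1) = 1 := by
    have := FiniteField.pow_card_sub_one_eq_one z hz0
    rwa [hcard] at this
  -- move to units
  set ζ : Kˣ := Units.mk0 z hz0 with hζ
  have hUq : ζ ^ (q - 1) = -1 := by
    ext
    rw [Units.val_pow_eq_pow_val]
    simp [hζ, hzd]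
  have hUN : ζ ^ (p ^ m - 1) = 1 := by
    ext
    rw [Units.val_pow_eq_pow_val]
    simp [hζ, hzN]
  set N : ℕ := p ^ m - 1 with hNdef
  set d : ℕ := Nat.gcd (q - 1) N with hd
  -- Bezout
  have key := Nat.gcd_eq_gcd_ab (q - 1) N
  have hζd : ζ ^ (d : ℤ) = (-1 : Kˣ) ^ (Nat.gcdA (q - 1) N) := by
    rw [← hd] at key
    rw [key, zpow_add, zpow_mul, zpow_mul, zpow_natCast, zpow_natCast, hUq, hUN, one_zpow,
      mul_one]
  -- contradictions
  have hcontra : ((-1 : Kˣ) : K) ≠ ((1 : Kˣ) : K) := by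
    simp only [Units.val_neg, Units.val_one]
    intro h
    have h2 : ((2 : ℕ) : K) = 0 := by push_cast; linear_combination -h
    have := (CharP.cast_eq_zero_iff K p 2).mp h2
    have := Nat.le_of_dvd (by norm_num) this
    omega
  -- e, D, S facts
  set e : ℕ := Nat.gcd k m with he
  have hem : e ∣ m := Nat.gcd_dvd_right k m
  have hek : e ∣ k := Nat.gcd_dvd_left k m
  have he1 : 1 ≤ e := Nat.gcd_pos_of_pos_left m (by omega)
  set D : ℕ := p ^ e - 1 with hD
  have hD2 : 2 ≤ p ^ e := by
    calc 2 ≤ p := by omega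
    _ ≤ p ^ e := Nat.le_self_pow (by omega) p
  set S : ℕ := ∑ i ∈ Finset.range (m / e), (p ^ e) ^ i with hS
  have hgeom : D * S = N := by
    have h1 : ((∑ i ∈ Finset.range (m / e), ((p : ℤ) ^ e) ^ i) * ((p : ℤ) ^ e - 1))
        = ((p : ℤ) ^ e) ^ (m / e) - 1 := geom_sum_mul _ _
    have h2 : ((p : ℤ) ^ e) ^ (m / e) = (p : ℤ) ^ m := by
      rw [← pow_mul, Nat.mul_div_cancel' hem]
    rw [h2] at h1
    have : (D : ℤ) * (S : ℤ) = (N : ℤ) := by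
      push_cast [hD, hS, hNdef, Nat.cast_sub (by omega : 1 ≤ p ^ e), Nat.cast_sub hN0]
      linear_combination h1
    exact_mod_cast this
  have hSodd : Odd S := by
    rw [Nat.odd_iff]
    have : S % 2 = (∑ i ∈ Finset.range (m / e), ((p ^ e) ^ i) % 2) % 2 :=
      Finset.sum_nat_mod _ _ _
    rw [this]
    have hterm : ∀ i ∈ Finset.range (m / e), ((p ^ e) ^ i) % 2 = 1 := by
      intro i _
      have : Odd ((p ^ e) ^ i) := by
        apply Odd.pow
        apply Odd.pow
        exact hp.odd_of_ne_two hp2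
      exact Nat.odd_iff.mp this
    rw [Finset.sum_congr rfl hterm]
    simp only [Finset.sum_const, Finset.card_range, smul_eq_mul, mul_one]
    exact Nat.odd_iff.mp hodd
  have hDd : D ∣ d := by
    apply Nat.dvd_gcd
    · -- D ∣ q - 1
      have := Nat.sub_dvd_pow_sub_pow (p ^ e) 1 (k / e)
      rw [one_pow, ← pow_mul, Nat.mul_div_cancel' hek] at this
      simpa [hD, hq] using this
    · rw [← hgeom]; exact Dvd.intro S rfl
  have hdN : d ∣ N := Nat.gcd_dvd_right _ _
  have hd1 : 1 ≤ d := Nat.gcd_pos_of_pos_left _ (by omega)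
  have hNd_odd : Odd (N / d) := by
    obtain ⟨t, ht⟩ := hDd
    have hD0 : 0 < D := by omega
    have htS : t ∣ S := by
      have : D * t ∣ D * S := by rw [← ht, hgeom]; exact hdN
      exact (mul_dvd_mul_iff_left (by omega : D ≠ 0)).mp this
    obtain ⟨c, hc⟩ := htS
    have ht0 : 0 < t := by
      rcases Nat.eq_zero_or_pos t with h | h
      · exfalso; rw [h, mul_zero] at ht; omega
      · exact h
    have hNdS : N / d = c := by
      rw [← hgeom, ht, hc, Nat.mul_div_mul_left _ _ hD0, Nat.mul_div_cancel_left _ ht0]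
    rw [hNdS]
    have : Odd (t * c) := hc ▸ hSodd
    exact (Nat.odd_mul.mp this).2
  rcases Int.even_or_odd (Nat.gcdA (q - 1) N) with hA | hA
  · -- even: ζ^d = 1, so ζ^(q-1) = 1 = -1, contradiction
    have h1 : ζ ^ d = 1 := by
      have := hζd
      rw [hA.neg_one_zpow] at this
      rwa [zpow_natCast] at this
    obtain ⟨c, hc⟩ := (Nat.gcd_dvd_left (q - 1) N : d ∣ q - 1)
    have : ζ ^ (q - 1) = 1 := by rw [hc, pow_mul, h1, one_pow]
    rw [hUq] at this
    exact hcontra (congrArg Units.val this)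
  · -- odd: ζ^d = -1, so 1 = ζ^N = (-1)^(N/d) = -1
    have h1 : ζ ^ d = -1 := by
      obtain ⟨c, hc⟩ := hA
      have hneg : (-1 : Kˣ) ^ (Nat.gcdA (q - 1) N) = -1 := by
        have h2 : ((-1 : Kˣ)) ^ (2 : ℤ) = 1 := by
          rw [zpow_two]; simp
        rw [hc, zpow_add, zpow_mul, h2, one_zpow, zpow_one, one_mul]
      have := hζd
      rw [hneg] at this
      rwa [zpow_natCast] at this
    have hNe : d * (N / d) = N := Nat.mul_div_cancel' hdN
    have h2 : ζ ^ N = (-1 : Kˣ) ^ (N / d) := by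
      calc ζ ^ N = ζ ^ (d * (N / d)) := by rw [hNe]
      _ = (ζ ^ d) ^ (N / d) := pow_mul ζ _ _
      _ = (-1 : Kˣ) ^ (N / d) := by rw [h1]
    rw [hUN, hNd_odd.neg_one_pow] at h2
    exact hcontra (congrArg Units.val h2.symm)

lemma aux_sq_of_fixed (p m : ℕ) (hp : Nat.Prime p) (hp2 : p ≠ 2)
    (hm : Even m) (hm0 : 0 < m)
    (K : Type) [Field K] [Fintype K] (hcard : Fintype.card K = p ^ m) :
    ∀ G : K, G ^ p ^ (m / 2) = G → IsSquare G := by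
  haveI := Fact.mk hp
  haveI : CharP K p := aux_charP p m hp hm0 K hcard
  intro G hG
  rcases eq_or_ne G 0 with rfl | hG0
  · exact IsSquare.zero
  have hchar2 : ringChar K ≠ 2 := by
    rw [ringChar.eq K p]
    intro h; exact hp2 h
  rw [FiniteField.isSquare_iff hchar2 hG0, hcard]
  set Q : ℕ := p ^ (m / 2) with hQ
  have hm2 : m / 2 + m / 2 = m := by
    obtain ⟨t, ht⟩ := hm; omega
  have hQ2 : Q * Q = p ^ m := by
    rw [hQ, ← pow_add, hm2]
  have hQodd : Odd Q := Odd.pow (hp.odd_of_ne_two hp2)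
  obtain ⟨s, hs⟩ := hQodd
  have hQ1 : 1 ≤ Q := Nat.one_le_pow _ _ hp.pos
  have hdiv : p ^ m / 2 = (Q - 1) * ((Q + 1) / 2) := by
    rw [← hQ2]
    have h1 : Q * Q = 2 * (2 * s * s + 2 * s) + 1 := by rw [hs]; ring
    have h2 : (Q - 1) = 2 * s := by omega
    have h3 : (Q + 1) / 2 = s + 1 := by omega
    rw [h1, h2, h3]
    have : 2 * s * (s + 1) = 2 * s * s + 2 * s := by ring
    omega
  have hGQ1 : G ^ (Q - 1) = 1 := by
    have h1 : G ^ (Q - 1) * G = 1 * G := by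
      rw [← pow_succ]
      have : Q - 1 + 1 = Q := by omega
      rw [this, hG, one_mul]
    exact mul_right_cancel₀ hG0 h1
  rw [hdiv, pow_mul, hGQ1, one_pow]

noncomputable def familySF (K : Type) [Field K] (q r : ℕ) (B A : K) (x y : K) : K × K :=
  (x ^ (q + 1) + B * y ^ (q + 1), x ^ r * y + A * (x * y ^ r))

/-- The map `F(x,y) = (x^{q+1} + B y^{q+1}, x^r y + (a/B) x y^r)` with `q = p^k`,
`r = p^{k+m/2}` is planar: for every `(u,v) ≠ (0,0)` the only solution of
`F(x+u,y+v) - F(x,y) - F(u,v) = (0,0)` is `(x,y) = (0,0)`. -/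
theorem stmt_0 (p m k : ℕ) (hp : Nat.Prime p) (hp2 : p ≠ 2)
    (hm : Even m) (hm0 : 0 < m)
    (K : Type) [Field K] [Fintype K] (hcard : Fintype.card K = p ^ m)
    (hk1 : 1 ≤ k) (hk2 : k ≤ m - 1)
    (hodd : Odd (m / Nat.gcd k m))
    (a B : K) (ha0 : a ≠ 0) (haQ : a ^ p ^ (m / 2) = a)
    (hB0 : B ≠ 0) (hB : ¬ ∃ c : K, c ^ 2 = B) :
    ∀ u v : K, (u, v) ≠ ((0 : K), (0 : K)) →
      ∀ x y : K,
        familySF K (p ^ k) (p ^ (k + m / 2)) B (a / B) (x + u) (y + v)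
            - familySF K (p ^ k) (p ^ (k + m / 2)) B (a / B) x y
            - familySF K (p ^ k) (p ^ (k + m / 2)) B (a / B) u v = (0, 0) →
          (x, y) = ((0 : K), (0 : K)) := by
  haveI := Fact.mk hp
  haveI : CharP K p := aux_charP p m hp hm0 K hcard
  have hp3 : 3 ≤ p := by have := hp.two_le; omega
  have hpodd : Odd p := hp.odd_of_ne_two hp2
  -- abbreviations
  set q : ℕ := p ^ k with hqdef
  set Q : ℕ := p ^ (m / 2) with hQdef
  set r : ℕ := p ^ (k + m / 2) with hrdef
  have hm2 : m / 2 + m / 2 = m := by obtain ⟨t, ht⟩ := hm; omega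
  have hq0ne : q ≠ 0 := by positivity
  have hQ0ne : Q ≠ 0 := by positivity
  have hr0ne : r ≠ 0 := by positivity
  have hqodd : Odd q := hpodd.pow
  have hQodd : Odd Q := hpodd.pow
  have hrodd : Odd r := hpodd.pow
  have hr2 : 2 ≤ r := by
    calc 2 ≤ p := by omega
    _ ≤ p ^ (k + m / 2) := Nat.le_self_pow (by omega) p
  -- power identities
  have hpm : ∀ z : K, z ^ (p ^ m) = z := by
    intro z; rw [← hcard]; exact FiniteField.pow_card z
  have hQQ : ∀ z : K, (z ^ Q) ^ Q = z := by
    intro z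
    rw [← pow_mul]
    have : Q * Q = p ^ m := by rw [hQdef, ← pow_add, hm2]
    rw [this, hpm]
  have hqQ : ∀ z : K, (z ^ q) ^ Q = z ^ r := by
    intro z
    rw [← pow_mul]
    congr 1
    rw [hqdef, hQdef, hrdef, ← pow_add]
  have hQq : ∀ z : K, (z ^ Q) ^ q = z ^ r := by
    intro z
    rw [← pow_mul]
    congr 1
    rw [hqdef, hQdef, hrdef, ← pow_add, Nat.add_comm]
  have hrQ : ∀ z : K, (z ^ r) ^ Q = z ^ q := by
    intro z
    rw [← pow_mul]
    have h1 : r * Q = q * p ^ m := by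
      rw [hqdef, hQdef, hrdef, ← pow_add, ← pow_add]
      congr 1
      omega
    rw [h1, pow_mul, hpm]
  -- Frobenius additivity
  have hq_add : ∀ z w : K, (z + w) ^ q = z ^ q + w ^ q := by
    intro z w; rw [hqdef]; exact add_pow_char_pow z w p k
  have hq_sub : ∀ z w : K, (z - w) ^ q = z ^ q - w ^ q := by
    intro z w; rw [hqdef]; exact sub_pow_char_pow z w k
  have hQ_add : ∀ z w : K, (z + w) ^ Q = z ^ Q + w ^ Q := by
    intro z w; rw [hQdef]; exact add_pow_char_pow z w p (m/2)
  have hQ_sub : ∀ z w : K, (z - w) ^ Q = z ^ Q - w ^ Q := by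
    intro z w; rw [hQdef]; exact sub_pow_char_pow z w (m/2)
  have hr_add : ∀ z w : K, (z + w) ^ r = z ^ r + w ^ r := by
    intro z w; rw [hrdef]; exact add_pow_char_pow z w p (k+m/2)
  -- additive kernel lemma
  have hA : ∀ z : K, z + z ^ q = 0 → z = 0 := by
    rw [hqdef]; exact aux_phi_inj p m k hp hp2 hm0 hk1 hodd K hcard
  -- squares
  have hsqF : ∀ G : K, G ^ Q = G → IsSquare G := by
    rw [hQdef]; exact aux_sq_of_fixed p m hp hp2 hm hm0 K hcard
  have hsq_neg1 : IsSquare (-1 : K) := hsqF _ (hQodd.neg_one_pow)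
  have hsq_a : IsSquare a := hsqF a haQ
  have hsq_even : ∀ (z : K) (n : ℕ), Even n → IsSquare (z ^ n) := fun z n hn =>
    hn.isSquare_pow z
  have hnotsqB : ¬ IsSquare B := by
    rintro ⟨c, hc⟩
    exact hB ⟨c, by rw [sq]; exact hc.symm⟩
  -- kernel-of-S helper
  have hSzero : ∀ c w : K, c ≠ 0 → c * w ^ q + c ^ q * w = 0 → w = 0 := by
    intro c w hc h
    have hcq : c ^ q ≠ 0 := pow_ne_zero _ hc
    have e : (w * c⁻¹ + (w * c⁻¹) ^ q) * (c ^ q * c) = c * w ^ q + c ^ q * w := by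
      rw [mul_pow, inv_pow]
      have h1 : c⁻¹ * c = 1 := inv_mul_cancel₀ hc
      have h2 : (c ^ q)⁻¹ * c ^ q = 1 := inv_mul_cancel₀ hcq
      linear_combination (w * c ^ q) * h1 + (w ^ q * c) * h2
    have key : (w * c⁻¹ + (w * c⁻¹) ^ q) * (c ^ q * c) = 0 := by rw [e]; linear_combination h
    have h0 : w * c⁻¹ + (w * c⁻¹) ^ q = 0 := by
      rcases mul_eq_zero.mp key with h' | h'
      · exact h'
      · exact absurd h' (mul_ne_zero hcq hc)
    have := hA _ h0
    rcases mul_eq_zero.mp this with h' | h'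
    · exact h'
    · exact absurd h' (inv_ne_zero hc)
  have hzq : (0 : K) ^ q = 0 := zero_pow hq0ne
  -- main body
  intro u v huv x y hF
  simp only [familySF, Prod.mk_sub_mk, Prod.mk.injEq] at hF
  obtain ⟨hF1, hF2⟩ := hF
  -- polarized equations
  have E1 : u * x ^ q + u ^ q * x + B * (v * y ^ q + v ^ q * y) = 0 := by
    simp only [pow_succ, hq_add] at hF1
    linear_combination hF1
  have E2 : v * x ^ r + u ^ r * y + a / B * (x * v ^ r + u * y ^ r) = 0 := by
    simp only [hr_add] at hF2
    linear_combination hF2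
  have E2' : B * (v * x ^ r + u ^ r * y) + a * (x * v ^ r + u * y ^ r) = 0 := by
    have hd : a / B * B = a := div_mul_cancel₀ a hB0
    linear_combination B * E2 - (x * v ^ r + u * y ^ r) * hd
  by_cases hv0 : v = 0
  · -- v = 0, u ≠ 0
    have hu : u ≠ 0 := by
      intro h; exact huv (by rw [h, hv0])
    have E1v : u * x ^ q + u ^ q * x = 0 := by
      rw [hv0] at E1
      linear_combination E1 - B * y * hzq
    have hx0 : x = 0 := hSzero u x hu E1v
    have E2v : B * (u ^ r * y) + a * (u * y ^ r) = 0 := by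
      rw [hv0, hx0] at E2'
      linear_combination E2'
    have hy0 : y = 0 := by
      by_contra hy0
      have hr1 : r - 1 + 1 = r := by omega
      have hupow : u ^ (r - 1) * u = u ^ r := by rw [← pow_succ, hr1]
      have hypow : y ^ (r - 1) * y = y ^ r := by rw [← pow_succ, hr1]
      have hfac : (u * y) * (B * u ^ (r - 1) + a * y ^ (r - 1)) = B * (u ^ r * y) + a * (u * y ^ r) := by
        rw [← hupow, ← hypow]; ring
      have hsum : B * u ^ (r - 1) + a * y ^ (r - 1) = 0 := by
        rcases mul_eq_zero.mp (by rw [hfac]; exact E2v) with h' | h'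
        · exact absurd h' (mul_ne_zero hu hy0)
        · exact h'
      have hBeq : B = -(a * y ^ (r - 1)) * (u ^ (r - 1))⁻¹ := by
        rw [eq_mul_inv_iff_mul_eq₀ (pow_ne_zero _ hu)]
        linear_combination hsum
      have hEvenr1 : Even (r - 1) := by
        obtain ⟨t, ht⟩ := hrodd
        exact ⟨t, by omega⟩
      have : IsSquare B := by
        rw [hBeq, neg_mul_eq_neg_mul, neg_eq_neg_one_mul]
        exact ((hsq_neg1.mul hsq_a).mul (hsq_even y _ hEvenr1)).mul
          ((hsq_even u _ hEvenr1).inv)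
      exact absurd this hnotsqB
    rw [hx0, hy0]
  by_cases hu0 : u = 0
  · -- u = 0, v ≠ 0
    have hv : v ≠ 0 := hv0
    have E1u : B * (v * y ^ q + v ^ q * y) = 0 := by
      rw [hu0] at E1
      linear_combination E1 - x * hzq
    have hy0 : y = 0 := by
      apply hSzero v y hv
      rcases mul_eq_zero.mp E1u with h' | h'
      · exact absurd h' hB0
      · exact h'
    have E2u : B * (v * x ^ r) + a * (x * v ^ r) = 0 := by
      rw [hu0, hy0] at E2'
      linear_combination E2'
    have hx0 : x = 0 := by
      by_contra hx0
      have hr1 : r - 1 + 1 = r := by omega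
      have hxpow : x ^ (r - 1) * x = x ^ r := by rw [← pow_succ, hr1]
      have hvpow : v ^ (r - 1) * v = v ^ r := by rw [← pow_succ, hr1]
      have hfac : (v * x) * (B * x ^ (r - 1) + a * v ^ (r - 1)) = B * (v * x ^ r) + a * (x * v ^ r) := by
        rw [← hxpow, ← hvpow]; ring
      have hsum : B * x ^ (r - 1) + a * v ^ (r - 1) = 0 := by
        rcases mul_eq_zero.mp (by rw [hfac]; exact E2u) with h' | h'
        · exact absurd h' (mul_ne_zero hv hx0)
        · exact h'
      have hBeq : B = -(a * v ^ (r - 1)) * (x ^ (r - 1))⁻¹ := by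
        rw [eq_mul_inv_iff_mul_eq₀ (pow_ne_zero _ hx0)]
        linear_combination hsum
      have hEvenr1 : Even (r - 1) := by
        obtain ⟨t, ht⟩ := hrodd
        exact ⟨t, by omega⟩
      have : IsSquare B := by
        rw [hBeq, neg_mul_eq_neg_mul, neg_eq_neg_one_mul]
        exact ((hsq_neg1.mul hsq_a).mul (hsq_even v _ hEvenr1)).mul
          ((hsq_even x _ hEvenr1).inv)
      exact absurd this hnotsqB
    rw [hx0, hy0]
  · -- u ≠ 0, v ≠ 0
    have hu : u ≠ 0 := hu0
    have hv : v ≠ 0 := hv0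
    by_cases hx0 : x = 0
    · -- then y = 0
      have E1x : B * (v * y ^ q + v ^ q * y) = 0 := by
        rw [hx0] at E1
        linear_combination E1 - u * hzq
      have hy0 : y = 0 := by
        apply hSzero v y hv
        rcases mul_eq_zero.mp E1x with h' | h'
        · exact absurd h' hB0
        · exact h'
      rw [hx0, hy0]
    · exfalso
      have hx : x ≠ 0 := hx0
      have hy : y ≠ 0 := by
        intro hy0
        apply hx
        apply hSzero u x hu
        rw [hy0] at E1
        linear_combination E1 - B * v * hzq
      -- τ-images of the equations
      have E1τ : u ^ Q * x ^ r + u ^ r * x ^ Q + B ^ Q * (v ^ Q * y ^ r + v ^ r * y ^ Q) = 0 := by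
        have e : (u * x ^ q + u ^ q * x + B * (v * y ^ q + v ^ q * y)) ^ Q
            = u ^ Q * x ^ r + u ^ r * x ^ Q + B ^ Q * (v ^ Q * y ^ r + v ^ r * y ^ Q) := by
          simp only [hQ_add, mul_pow, hqQ]
        rw [← e, E1]
        exact zero_pow hQ0ne
      have E2τ : B ^ Q * (v ^ Q * x ^ q + u ^ q * y ^ Q) + a * (x ^ Q * v ^ q + u ^ Q * y ^ q) = 0 := by
        have e : (B * (v * x ^ r + u ^ r * y) + a * (x * v ^ r + u * y ^ r)) ^ Q
            = B ^ Q * (v ^ Q * x ^ q + u ^ q * y ^ Q) + a * (x ^ Q * v ^ q + u ^ Q * y ^ q) := by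
          simp only [hQ_add, mul_pow, hrQ, haQ]
        rw [← e, E2']
        exact zero_pow hQ0ne
      -- names
      set S1 : K := u * x ^ q + u ^ q * x with hS1def
      set T1 : K := v * y ^ q + v ^ q * y with hT1def
      set S1Q : K := u ^ Q * x ^ r + u ^ r * x ^ Q with hS1Qdef
      set T1Q : K := v ^ Q * y ^ r + v ^ r * y ^ Q with hT1Qdef
      set Ψτ : K := v ^ Q * x ^ q + u ^ q * y ^ Q with hΨτdef
      set Χ : K := x ^ Q * v ^ q + u ^ Q * y ^ q with hΧdef
      set Ψ' : K := v * x ^ r + u ^ r * y with hΨ'def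
      set Χ' : K := x * v ^ r + u * y ^ r with hΧ'def
      set δ : K := u ^ Q * y - v * x ^ Q with hδdef
      set δq : K := u ^ r * y ^ q - v ^ q * x ^ r with hδqdef
      set δQ : K := u * y ^ Q - v ^ Q * x with hδQdef
      set δrq : K := u ^ q * y ^ r - v ^ r * x ^ q with hδrqdef
      -- nonvanishing
      have hS1ne : S1 ≠ 0 := by
        intro h
        exact hx (hSzero u x hu (by rw [← hS1def]; exact h))
      have hT1ne : T1 ≠ 0 := by
        intro h
        apply hS1ne
        rw [h, mul_zero, add_zero] at E1
        exact E1
      -- Frobenius facts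
      have hS1Q : S1 ^ Q = S1Q := by
        rw [hS1def, hS1Qdef]
        simp only [hQ_add, mul_pow, hqQ]
      have hT1Q : T1 ^ Q = T1Q := by
        rw [hT1def, hT1Qdef]
        simp only [hQ_add, mul_pow, hqQ]
      have hT1QQ : T1Q ^ Q = T1 := by
        rw [hT1def, hT1Qdef]
        simp only [hQ_add, mul_pow, hrQ, hQQ]
      have hdq : δ ^ q = δq := by
        rw [hδdef, hδqdef]
        simp only [hq_sub, mul_pow, hQq]
      have hdQ : δ ^ Q = δQ := by
        rw [hδdef, hδQdef]
        simp only [hQ_sub, mul_pow, hQQ]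
      have hdqQ : δq ^ Q = δrq := by
        rw [hδqdef, hδrqdef]
        simp only [hQ_sub, mul_pow, hrQ, hqQ]
      -- the two polynomial identities
      have hID1 : Χ * Ψ' = T1 * S1Q + δ * δq := by
        rw [hΧdef, hΨ'def, hT1def, hS1Qdef, hδdef, hδqdef]
        ring
      have hID2 : Χ' * Ψτ = T1Q * S1 + δQ * δrq := by
        rw [hΧ'def, hΨτdef, hT1Qdef, hS1def, hδQdef, hδrqdef]
        ring
      -- the key Galois-fixedness
      have hstar : a * (S1 * T1Q * (δ * δq)) = a * (S1Q * T1 * (δQ * δrq)) := by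
        linear_combination (-(a * S1 * T1Q)) * hID1 + (a * S1Q * T1) * hID2
          + (S1 * T1Q * Ψ') * E2τ - (S1Q * T1 * Ψτ) * E2'
          - (B ^ Q * Ψ' * Ψτ * T1Q) * E1 + (B * Ψτ * Ψ' * T1) * E1τ
      have hstar' : S1 * T1Q * (δ * δq) = S1Q * T1 * (δQ * δrq) :=
        mul_left_cancel₀ ha0 hstar
      by_cases hδ0 : δ = 0
      · -- degenerate: u^Q y = v x^Q
        have hδ0' : u ^ Q * y = v * x ^ Q := by
          rw [hδdef] at hδ0
          linear_combination hδ0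
        have hδ0q : u ^ r * y ^ q = v ^ q * x ^ r := by
          have h := congrArg (· ^ q) hδ0'
          simp only [mul_pow, hQq] at h
          exact h
        have hkey : T1 * (u ^ r * u ^ Q) = v ^ q * v * S1Q := by
          rw [hT1def, hS1Qdef]
          linear_combination (v * u ^ Q) * hδ0q + (v ^ q * u ^ r) * hδ0'
        have hBeq2 : B * (v ^ q * v * (S1 * S1Q)) = -(S1 * S1 * (u ^ r * u ^ Q)) := by
          linear_combination (-(B * S1)) * hkey + (S1 * (u ^ r * u ^ Q)) * E1
        have hS1Qne : S1Q ≠ 0 := by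
          rw [← hS1Q]; exact pow_ne_zero _ hS1ne
        have hne : v ^ q * v * (S1 * S1Q) ≠ 0 :=
          mul_ne_zero (mul_ne_zero (pow_ne_zero _ hv) hv) (mul_ne_zero hS1ne hS1Qne)
        have hBeq : B = -(S1 * S1 * (u ^ r * u ^ Q)) * (v ^ q * v * (S1 * S1Q))⁻¹ := by
          rw [eq_mul_inv_iff_mul_eq₀ hne]
          linear_combination hBeq2
        have hrQeven : Even (r + Q) := hrodd.add_odd hQodd
        have hq1even : Even (q + 1) := hqodd.add_one
        have hQ1even : Even (Q + 1) := hQodd.add_one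
        have hsq1 : IsSquare (u ^ r * u ^ Q) := by
          rw [← pow_add]; exact hsq_even u _ hrQeven
        have hsq2 : IsSquare (v ^ q * v) := by
          rw [← pow_succ]; exact hsq_even v _ hq1even
        have hsq3 : IsSquare (S1 * S1Q) := by
          rw [← hS1Q, mul_comm, ← pow_succ]
          exact hsq_even S1 _ hQodd.add_one
        have : IsSquare B := by
          rw [hBeq, neg_eq_neg_one_mul]
          exact (hsq_neg1.mul (IsSquare.mul (⟨S1, rfl⟩ : IsSquare (S1 * S1)) hsq1)).mul ((hsq2.mul hsq3).inv)
        exact absurd this hnotsqB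
      · -- main branch
        set G : K := S1 * T1Q * (δ * δq) with hGdef
        have hGfix : G ^ Q = G := by
          rw [hGdef, mul_pow, mul_pow, mul_pow, hS1Q, hT1QQ, hdQ, hdqQ]
          exact hstar'.symm
        have hsqG : IsSquare G := hsqF G hGfix
        have hGB : B * (T1Q * T1 * (δq * δ)) = -G := by
          rw [hGdef]
          linear_combination (T1Q * (δ * δq)) * E1
        have hδqne : δq ≠ 0 := by
          rw [← hdq]; exact pow_ne_zero _ hδ0
        have hT1Qne : T1Q ≠ 0 := by
          rw [← hT1Q]; exact pow_ne_zero _ hT1ne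
        have hne : T1Q * T1 * (δq * δ) ≠ 0 :=
          mul_ne_zero (mul_ne_zero hT1Qne hT1ne) (mul_ne_zero hδqne hδ0)
        have hBeq : B = -G * (T1Q * T1 * (δq * δ))⁻¹ := by
          rw [eq_mul_inv_iff_mul_eq₀ hne]
          linear_combination hGB
        have hq1even : Even (q + 1) := hqodd.add_one
        have hQ1even : Even (Q + 1) := hQodd.add_one
        have hsq1 : IsSquare (T1Q * T1) := by
          rw [← hT1Q, ← pow_succ]; exact hsq_even T1 _ hQ1even
        have hsq2 : IsSquare (δq * δ) := by
          rw [← hdq, ← pow_succ]; exact hsq_even δ _ hq1even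
        have : IsSquare B := by
          rw [hBeq, neg_eq_neg_one_mul]
          exact (hsq_neg1.mul hsqG).mul ((hsq1.mul hsq2).inv)
        exact absurd this hnotsqB
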